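/- Let ε ∈ (0,1] and r ∈ [ε, 1/ε]. Then r·(log r)² ≤ (2/ε)·(r·log r − r + 1). -/

import Mathlib

open Real

/-- For `x ≥ 0`, `x² ≤ 2(x eˣ − eˣ + 1)`. -/
lemma aux_A (x : ℝ) (hx : 0 ≤ x) : x ^ 2 ≤ 2 * (x * Real.exp x - Real.exp x + 1) := by
  have key : MonotoneOn (fun x : ℝ => 2 * (x * Real.exp x - Real.exp x + 1) - x ^ 2)
      (Set.Ici 0) := by
    apply monotoneOn_of_deriv_nonneg (convex_Ici 0)
    · exact (Continuous.sub (by continuity) (by continuity)).continuousOn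
    · exact Differentiable.differentiableOn (by fun_prop)
    · intro y hy
      have h1 := (((((hasDerivAt_id y).mul (Real.hasDerivAt_exp y)).sub
        (Real.hasDerivAt_exp y)).add_const (1:ℝ)).const_mul (2:ℝ)).sub (hasDerivAt_pow 2 y)
      simp only [id_eq] at h1
      rw [show deriv (fun x : ℝ => 2 * (x * Real.exp x - Real.exp x + 1) - x ^ 2) y = _ from h1.deriv]
      norm_num
      have hy0 : 0 ≤ y := by simpa using interior_subset (s := Set.Ici (0:ℝ)) hy
      have h1 : 1 ≤ Real.exp y := by
        simpa using Real.exp_le_exp.2 hy0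
      nlinarith
  have := key (Set.self_mem_Ici) (Set.mem_Ici.2 hx) hx
  simp only [Real.exp_zero] at this
  nlinarith [this]

/-- For `x ≥ 0`, `x² ≤ 2(e^{2x} − (1+x)eˣ)`. -/
lemma aux_B (x : ℝ) (hx : 0 ≤ x) :
    x ^ 2 ≤ 2 * (Real.exp (2 * x) - (1 + x) * Real.exp x) := by
  have key : MonotoneOn (fun x : ℝ => 2 * (Real.exp (2 * x) - (1 + x) * Real.exp x) - x ^ 2)
      (Set.Ici 0) := by
    apply monotoneOn_of_deriv_nonneg (convex_Ici 0)
    · exact (Continuous.sub (by continuity) (by continuity)).continuousOn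
    · exact Differentiable.differentiableOn (by fun_prop)
    · intro y hy
      have hexp2 : HasDerivAt (fun x : ℝ => Real.exp (2 * x)) (Real.exp (2 * y) * 2) y :=
        (Real.hasDerivAt_exp (2 * y)).comp y (by simpa using (hasDerivAt_id y).const_mul 2)
      have h1 := ((hexp2.sub ((((hasDerivAt_const y (1:ℝ)).add (hasDerivAt_id y)).mul
        (Real.hasDerivAt_exp y)))).const_mul (2:ℝ)).sub (hasDerivAt_pow 2 y)
      rw [show deriv (fun x : ℝ => 2 * (Real.exp (2 * x) - (1 + x) * Real.exp x) - x ^ 2) y = _ from h1.deriv]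
      norm_num
      have hy0 : 0 ≤ y := by simpa using interior_subset (s := Set.Ici (0:ℝ)) hy
      have h1 : 1 ≤ Real.exp y := by simpa using Real.exp_le_exp.2 hy0
      have h2 : 1 + y ≤ Real.exp y := by linarith [Real.add_one_le_exp y]
      have h3 : Real.exp (2 * y) = Real.exp y * Real.exp y := by
        rw [← Real.exp_add]; ring_nf
      rw [h3]
      nlinarith [h1, h2, hy0]
  have := key (Set.self_mem_Ici) (Set.mem_Ici.2 hx) hx
  simp only [mul_zero, Real.exp_zero] at this
  nlinarith [this]

/-- For `r ≥ 1`, `(log r)² ≤ 2(r log r − r + 1)`. -/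
lemma aux_A' (r : ℝ) (hr : 1 ≤ r) :
    Real.log r ^ 2 ≤ 2 * (r * Real.log r - r + 1) := by
  have hr0 : 0 < r := lt_of_lt_of_le one_pos hr
  have hL : 0 ≤ Real.log r := Real.log_nonneg hr
  have := aux_A (Real.log r) hL
  rw [Real.exp_log hr0] at this
  nlinarith [this]

/-- For `0 < r ≤ 1`, `r²(log r)² ≤ 2(r log r − r + 1)`. -/
lemma aux_B' (r : ℝ) (hr0 : 0 < r) (hr : r ≤ 1) :
    r ^ 2 * Real.log r ^ 2 ≤ 2 * (r * Real.log r - r + 1) := by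
  set x := -Real.log r with hxdef
  have hx : 0 ≤ x := by
    simp only [hxdef]
    have := Real.log_nonpos hr0.le hr
    linarith
  have h := aux_B x hx
  have hex : Real.exp x = 1 / r := by
    rw [hxdef, Real.exp_neg, Real.exp_log hr0, one_div]
  have hex2 : Real.exp (2 * x) = 1 / r ^ 2 := by
    rw [two_mul, Real.exp_add, hex]; ring
  rw [hex, hex2] at h
  have hr2 : (0:ℝ) < r ^ 2 := by positivity
  have h' := mul_le_mul_of_nonneg_left h hr2.le
  have hlx : Real.log r = -x := by rw [hxdef]; ring
  rw [hlx]
  have hrr : r ^ 2 * (2 * (1 / r ^ 2 - (1 + x) * (1 / r)))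
      = 2 * (1 - (1 + x) * r) := by
    field_simp
  calc r ^ 2 * (-x) ^ 2 = r ^ 2 * x ^ 2 := by ring
    _ ≤ r ^ 2 * (2 * (1 / r ^ 2 - (1 + x) * (1 / r))) := h'
    _ = 2 * (1 - (1 + x) * r) := hrr
    _ = 2 * (r * (-x) - r + 1) := by ring

/-- Pointwise inequality used to convert KL error to L₂ log-error: for
`ε ∈ (0,1]` and `r ∈ [ε, 1/ε]`, `r (log r)² ≤ (2/ε)(r log r − r + 1)`. -/
theorem stmt_14 (ε r : ℝ) (hε0 : 0 < ε) (hε1 : ε ≤ 1) (hr1 : ε ≤ r) (hr2 : r ≤ 1 / ε) :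
    r * Real.log r ^ 2 ≤ 2 / ε * (r * Real.log r - r + 1) := by
  have hr0 : 0 < r := lt_of_lt_of_le hε0 hr1
  rcases le_total 1 r with h1 | h1
  · have hA := aux_A' r h1
    have hf : 0 ≤ r * Real.log r - r + 1 := by nlinarith [sq_nonneg (Real.log r)]
    have hre : r * ε ≤ 1 := by
      rw [le_div_iff₀ hε0] at hr2; linarith
    rw [div_mul_eq_mul_div, le_div_iff₀ hε0]
    nlinarith [sq_nonneg (Real.log r), mul_nonneg hf (sub_nonneg.2 hr1)]
  · have hB := aux_B' r hr0 h1
    have hf : 0 ≤ r * Real.log r - r + 1 := by nlinarith [mul_nonneg (sq_nonneg r) (sq_nonneg (Real.log r))]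
    rw [div_mul_eq_mul_div, le_div_iff₀ hε0]
    -- goal : r * log r ^ 2 * ε ≤ 2 * (r * log r - r + 1)
    have hεr : ε ≤ r := hr1
    nlinarith [mul_nonneg (sub_nonneg.2 hr1) (sq_nonneg (Real.log r)), hB]
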